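/- With $\psi$ as defined via $r(x) = \frac{3-\sqrt{1+8(1-2x)^2}}{8}$ and $\psi(x) = H(2r(x)) + 4r(x) + 2(1-2r(x))H\!\left(\frac{x-r(x)}{1-2r(x)}\right) - 2H(x)$ on $[0,1/2]$, one has $\psi(x) \le \min\{2\log_2 3 \cdot x,\ 1\}$ for all $x \in [0,1/2]$, with $\psi(x) = 2\log_2(3)x$ only at $x = 0$ and $\psi(x) = 1$ only at $x = 1/2$. -/

import Mathlib

/-- Binary entropy `H(p) = -p log₂ p - (1-p) log₂ (1-p)`. -/
noncomputable def H (p : ℝ) : ℝ := -p * Real.logb 2 p - (1 - p) * Real.logb 2 (1 - p)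

/-- `r(x) = (3 - √(1 + 8(1-2x)²)) / 8`. -/
noncomputable def r (x : ℝ) : ℝ := (3 - Real.sqrt (1 + 8 * (1 - 2 * x) ^ 2)) / 8

/-- `ψ(x) = H(2r) + 4r + 2(1-2r) H((x-r)/(1-2r)) - 2H(x)`. -/
noncomputable def psi (x : ℝ) : ℝ :=
  H (2 * r x) + 4 * r x + 2 * (1 - 2 * r x) * H ((x - r x) / (1 - 2 * r x)) - 2 * H x

/-- Natural-log version of binary entropy. -/
noncomputable def hl (p : ℝ) : ℝ := -(p * Real.log p) - (1 - p) * Real.log (1 - p)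

lemma H_eq (p : ℝ) : H p = hl p / Real.log 2 := by
  unfold H hl Real.logb; ring

lemma hl_hasDerivAt {p : ℝ} (h0 : 0 < p) (h1 : p < 1) :
    HasDerivAt hl (Real.log (1 - p) - Real.log p) p := by
  have h2 : HasDerivAt (fun p : ℝ => p * Real.log p) (Real.log p + 1) p :=
    Real.hasDerivAt_mul_log h0.ne'
  have h3 : HasDerivAt (fun p : ℝ => (1 - p) * Real.log (1 - p))
      ((Real.log (1 - p) + 1) * (0 - 1)) p := by
    have hinner : HasDerivAt (fun p : ℝ => 1 - p) (0 - 1) p :=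
      (hasDerivAt_const p 1).sub (hasDerivAt_id p)
    exact (Real.hasDerivAt_mul_log (by linarith : (1:ℝ) - p ≠ 0)).comp p hinner
  have := (h2.neg).sub h3
  exact this.congr_deriv (by ring)

lemma hl_continuous : Continuous hl := by
  have h1 : Continuous fun p : ℝ => p * Real.log p := Real.continuous_mul_log
  have h2 : Continuous fun p : ℝ => (1 - p) * Real.log (1 - p) :=
    h1.comp (continuous_const.sub continuous_id)
  exact h1.neg.sub h2

lemma sqrt_arg_pos (x : ℝ) : (0:ℝ) < 1 + 8 * (1 - 2 * x) ^ 2 := by positivity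

lemma s_sq (x : ℝ) : (Real.sqrt (1 + 8 * (1 - 2 * x) ^ 2)) ^ 2 = 1 + 8 * (1 - 2 * x) ^ 2 :=
  Real.sq_sqrt (sqrt_arg_pos x).le

lemma s_pos (x : ℝ) : 0 < Real.sqrt (1 + 8 * (1 - 2 * x) ^ 2) :=
  Real.sqrt_pos.2 (sqrt_arg_pos x)

lemma one_le_s (x : ℝ) : 1 ≤ Real.sqrt (1 + 8 * (1 - 2 * x) ^ 2) := by
  nlinarith [s_sq x, s_pos x, sq_nonneg (1 - 2*x)]

lemma one_sub_two_r_pos (x : ℝ) : 0 < 1 - 2 * r x := by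
  unfold r
  nlinarith [s_pos x]

lemma r_continuous : Continuous r := by
  unfold r
  continuity

lemma psi_continuous : Continuous psi := by
  have hr2 : Continuous fun x => 2 * r x := continuous_const.mul r_continuous
  have hq : Continuous fun x => (x - r x) / (1 - 2 * r x) :=
    (continuous_id.sub r_continuous).div (continuous_const.sub hr2)
      fun x => (one_sub_two_r_pos x).ne'
  have hH : Continuous H := by
    have : Continuous fun p => hl p / Real.log 2 := hl_continuous.div_const _
    simpa [funext H_eq] using this
  unfold psi
  exact (((hH.comp hr2).add (continuous_const.mul r_continuous)).add
    ((continuous_const.mul (continuous_const.sub hr2)).mul (hH.comp hq))).sub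
    (continuous_const.mul hH)

section main
variable {x : ℝ}

lemma s_lt_three (hx0 : 0 < x) (hx2 : x < 1/2) : Real.sqrt (1 + 8 * (1 - 2 * x) ^ 2) < 3 := by
  nlinarith [s_sq x, s_pos x]

lemma r_pos (hx0 : 0 < x) (hx2 : x < 1/2) : 0 < r x := by
  unfold r; nlinarith [s_lt_three hx0 hx2]

lemma r_lt_x (hx0 : 0 < x) (hx2 : x < 1/2) : r x < x := by
  have h : 3 - 8 * x < Real.sqrt (1 + 8 * (1 - 2 * x) ^ 2) := by
    nlinarith [s_sq x, one_le_s x]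
  unfold r; linarith

lemma r_lt_quarter (hx0 : 0 < x) (hx2 : x < 1/2) : r x < 1/4 := by
  have h : 1 < Real.sqrt (1 + 8 * (1 - 2 * x) ^ 2) := by
    nlinarith [s_sq x, one_le_s x]
  unfold r; linarith

lemma key_identity (hx0 : 0 < x) (hx2 : x < 1/2) : 2 * (x - r x) * (1 - x - r x) = r x * (1 - 2 * r x) := by
  have h := s_sq x
  unfold r
  nlinarith [h]

-- Q := (x - r x)/(1 - 2 r x) facts
lemma Q_pos (hx0 : 0 < x) (hx2 : x < 1/2) : 0 < (x - r x) / (1 - 2 * r x) :=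
  div_pos (by linarith [r_lt_x hx0 hx2]) (one_sub_two_r_pos x)

lemma Q_lt_x (hx0 : 0 < x) (hx2 : x < 1/2) : (x - r x) / (1 - 2 * r x) < x := by
  rw [div_lt_iff₀ (one_sub_two_r_pos x)]
  nlinarith [r_pos hx0 hx2]

lemma Q_lt_one (hx0 : 0 < x) (hx2 : x < 1/2) : (x - r x) / (1 - 2 * r x) < 1 :=
  lt_trans (Q_lt_x hx0 hx2) (by linarith)

lemma r_hasDerivAt (hx0 : 0 < x) (hx2 : x < 1/2) :
    HasDerivAt r (2 * (1 - 2 * x) / Real.sqrt (1 + 8 * (1 - 2 * x) ^ 2)) x := by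
  set s := Real.sqrt (1 + 8 * (1 - 2 * x) ^ 2) with hs
  have hinner : HasDerivAt (fun x : ℝ => 1 + 8 * (1 - 2 * x) ^ 2) (-32 * (1 - 2 * x)) x := by
    have : HasDerivAt (fun x : ℝ => 1 - 2 * x) (-2) x := by
      have := (hasDerivAt_const x (1:ℝ)).sub ((hasDerivAt_id x).const_mul 2)
      exact this.congr_deriv (by ring)
    have h2 := (this.pow 2).const_mul 8
    have h3 := (hasDerivAt_const x 1).add h2
    exact h3.congr_deriv (by ring)
  have hsqrt : HasDerivAt (fun x : ℝ => Real.sqrt (1 + 8 * (1 - 2 * x) ^ 2))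
      (1 / (2 * s) * (-32 * (1 - 2 * x))) x :=
    (Real.hasDerivAt_sqrt (sqrt_arg_pos x).ne').comp x hinner
  have h4 : HasDerivAt r ((0 - 1 / (2 * s) * (-32 * (1 - 2 * x))) / 8) x := by
    unfold r
    exact (((hasDerivAt_const x 3).sub hsqrt).div_const 8)
  convert h4 using 1
  have : s ≠ 0 := (s_pos x).ne'
  field_simp
  ring

lemma deriv_algebra (x R r' lg2 lQ l1Q lx l1x l2R : ℝ) (h12 : (1:ℝ) - 2*R ≠ 0)
    (hlg : lg2 ≠ 0) :
    (2*(l1Q - lQ) - 2*(l1x - lx))/lg2 =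
    ((l2R - (l2R + lQ + l1Q + 2*lg2))*(2*r')
      + ((0-2*r')*2*(-(((x-R)/(1-2*R))*lQ) - (1-(x-R)/(1-2*R))*l1Q)
         + 2*(1-2*R)*((l1Q - lQ)*(((1 - r') * (1 - 2 * R) - (x - R) * (0 - 2 * r')) / (1 - 2 * R) ^ 2)))
      - 2*(l1x - lx))/lg2 + 4*r' := by
  field_simp
  ring

lemma psi_hasDerivAt (hx0 : 0 < x) (hx2 : x < 1/2) :
    HasDerivAt psi
      ((2 * (Real.log (1 - (x - r x) / (1 - 2 * r x)) - Real.log ((x - r x) / (1 - 2 * r x)))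
        - 2 * (Real.log (1 - x) - Real.log x)) / Real.log 2) x := by
  set s := Real.sqrt (1 + 8 * (1 - 2 * x) ^ 2) with hs
  have hspos : 0 < s := s_pos x
  have h12R : 0 < 1 - 2 * r x := one_sub_two_r_pos x
  have hR0 : 0 < r x := r_pos hx0 hx2
  have hR4 : r x < 1/4 := r_lt_quarter hx0 hx2
  have hRx : r x < x := r_lt_x hx0 hx2
  set Q : ℝ := (x - r x) / (1 - 2 * r x) with hQdef
  have hQ0 : 0 < Q := Q_pos hx0 hx2
  have hQ1 : Q < 1 := Q_lt_one hx0 hx2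
  set r' : ℝ := 2 * (1 - 2 * x) / s with hr'
  have hr : HasDerivAt r r' x := r_hasDerivAt hx0 hx2
  -- rewrite psi in terms of hl
  have hpsieq : psi = fun y => (hl (2 * r y) + 2 * (1 - 2 * r y) * hl ((y - r y) / (1 - 2 * r y))
      - 2 * hl y) / Real.log 2 + 4 * r y := by
    funext y
    unfold psi
    rw [H_eq, H_eq, H_eq]
    ring
  rw [hpsieq]
  -- derivative of each piece
  have hA : HasDerivAt (fun y => hl (2 * r y))
      ((Real.log (1 - 2 * r x) - Real.log (2 * r x)) * (2 * r')) x :=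
    (hl_hasDerivAt (by linarith) (by linarith)).comp x (hr.const_mul 2)
  have hq : HasDerivAt (fun y => (y - r y) / (1 - 2 * r y))
      (((1 - r') * (1 - 2 * r x) - (x - r x) * (0 - 2 * r')) / (1 - 2 * r x) ^ 2) x := by
    exact ((hasDerivAt_id x).sub hr).div ((hasDerivAt_const x 1).sub (hr.const_mul 2)) h12R.ne'
  set q' : ℝ := ((1 - r') * (1 - 2 * r x) - (x - r x) * (0 - 2 * r')) / (1 - 2 * r x) ^ 2 with hq'def
  have hB : HasDerivAt (fun y => 2 * (1 - 2 * r y) * hl ((y - r y) / (1 - 2 * r y)))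
      ((0 - 2 * r') * 2 * hl Q + 2 * (1 - 2 * r x) * ((Real.log (1 - Q) - Real.log Q) * q')) x := by
    have h1 : HasDerivAt (fun y => 2 * (1 - 2 * r y)) ((0 - 2 * r') * 2) x := by
      have := ((hasDerivAt_const x 1).sub (hr.const_mul 2)).const_mul 2
      exact this.congr_deriv (by ring)
    have h2 : HasDerivAt (fun y => hl ((y - r y) / (1 - 2 * r y)))
        ((Real.log (1 - Q) - Real.log Q) * q') x :=
      by have := (hl_hasDerivAt hQ0 hQ1).comp x hq; exact this
    have := h1.mul h2
    exact this
  have hC : HasDerivAt hl (Real.log (1 - x) - Real.log x) x :=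
    hl_hasDerivAt hx0 (by linarith)
  have htot := (((hA.add hB).sub (hC.const_mul 2)).div_const (Real.log 2)).add
    (hr.const_mul 4)
  refine htot.congr_deriv (Eq.symm ?_)
  -- now prove the derivative value identity
  have hL : Real.log 2 ≠ 0 := (Real.log_pos (by norm_num)).ne'
  have hQx : (1 - 2 * r x) * Q = x - r x := by
    rw [hQdef]; field_simp
  -- key log identity
  have h1Qpos : 0 < 1 - Q := by linarith
  have hne1 : (1 - 2 * r x) ≠ 0 := h12R.ne'
  have key : Real.log (2 * r x) =
      Real.log (1 - 2 * r x) + Real.log Q + Real.log (1 - Q) + 2 * Real.log 2 := by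
    have hk := key_identity hx0 hx2
    have h1Q : (1 - 2 * r x) * (1 - Q) = 1 - x - r x := by
      have h' : (1 - 2 * r x) * (1 - Q) = (1 - 2 * r x) - (1 - 2 * r x) * Q := by ring
      rw [h', hQx]; ring
    have harg : 2 * r x = (1 - 2 * r x) * Q * (1 - Q) * (2 * 2) := by
      have h2 : 2 * r x * (1 - 2 * r x) = (1 - 2 * r x) * Q * (1 - Q) * (2 * 2) * (1 - 2 * r x) := by
        have expand : (1 - 2 * r x) * Q * (1 - Q) * (2 * 2) * (1 - 2 * r x)
            = ((1 - 2 * r x) * Q) * ((1 - 2 * r x) * (1 - Q)) * 4 := by ring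
        rw [expand, hQx, h1Q]; nlinarith [hk]
      have := mul_right_cancel₀ h12R.ne' h2
      linarith [this]
    calc Real.log (2 * r x) = Real.log ((1 - 2 * r x) * Q * (1 - Q) * (2 * 2)) := by rw [← harg]
      _ = Real.log ((1 - 2 * r x) * Q * (1 - Q)) + Real.log (2 * 2) :=
          Real.log_mul (mul_ne_zero (mul_ne_zero hne1 hQ0.ne') h1Qpos.ne') (by norm_num)
      _ = Real.log ((1 - 2 * r x) * Q) + Real.log (1 - Q) + Real.log (2 * 2) := by
          rw [Real.log_mul (mul_ne_zero hne1 hQ0.ne') h1Qpos.ne']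
      _ = Real.log (1 - 2 * r x) + Real.log Q + Real.log (1 - Q) + Real.log (2 * 2) := by
          rw [Real.log_mul hne1 hQ0.ne']
      _ = Real.log (1 - 2 * r x) + Real.log Q + Real.log (1 - Q) + 2 * Real.log 2 := by
          rw [Real.log_mul (by norm_num : (2:ℝ) ≠ 0) (by norm_num : (2:ℝ) ≠ 0)]; ring
  rw [key]
  have hlQ : hl Q = -(Q * Real.log Q) - (1 - Q) * Real.log (1 - Q) := rfl
  rw [hlQ, hq'def, hQdef]
  exact deriv_algebra x (r x) r' (Real.log 2)
    (Real.log ((x - r x) / (1 - 2 * r x))) (Real.log (1 - (x - r x) / (1 - 2 * r x)))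
    (Real.log x) (Real.log (1 - x)) (Real.log (1 - 2 * r x)) h12R.ne' hL
end main

lemma sqrt_nine : Real.sqrt (9:ℝ) = 3 := by
  rw [show (9:ℝ) = 3^2 by norm_num, Real.sqrt_sq (by norm_num : (0:ℝ) ≤ 3)]

lemma r_zero : r 0 = 0 := by
  unfold r
  rw [show (1:ℝ) + 8 * (1 - 2 * 0) ^ 2 = 9 by norm_num, sqrt_nine]
  norm_num

lemma r_half : r (1/2) = 1/4 := by
  unfold r
  rw [show (1:ℝ) + 8 * (1 - 2 * (1/2)) ^ 2 = 1 by norm_num, Real.sqrt_one]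
  norm_num

lemma H_zero : H 0 = 0 := by simp [H]

lemma logb_half : Real.logb 2 (1/2 : ℝ) = -1 := by
  rw [show (1/2 : ℝ) = 2⁻¹ by norm_num]
  simp [Real.logb_inv]

lemma H_half : H (1/2) = 1 := by
  rw [H, show (1:ℝ) - 1/2 = 1/2 by norm_num, logb_half]
  norm_num

lemma psi_zero : psi 0 = 0 := by
  simp [psi, r_zero, H_zero]

lemma psi_half : psi (1/2) = 1 := by
  have e1 : (2:ℝ) * (1/4) = 1/2 := by norm_num
  have e2 : ((1:ℝ)/2 - 1/4) / (1 - 2 * (1/4)) = 1/2 := by norm_num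
  rw [psi, r_half, e2, e1, H_half]
  norm_num

lemma deriv_pos {x : ℝ} (hx0 : 0 < x) (hx2 : x < 1/2) :
    0 < (2 * (Real.log (1 - (x - r x) / (1 - 2 * r x)) - Real.log ((x - r x) / (1 - 2 * r x)))
        - 2 * (Real.log (1 - x) - Real.log x)) / Real.log 2 := by
  set Q : ℝ := (x - r x) / (1 - 2 * r x) with hQ
  have hQ0 : 0 < Q := Q_pos hx0 hx2
  have hQx : Q < x := Q_lt_x hx0 hx2
  have hL : 0 < Real.log 2 := Real.log_pos (by norm_num)
  have h1 : Real.log Q < Real.log x := Real.log_lt_log hQ0 hQx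
  have h2 : Real.log (1 - x) < Real.log (1 - Q) := Real.log_lt_log (by linarith) (by linarith)
  apply div_pos (by linarith) hL

lemma r_bound {x : ℝ} (hx0 : 0 < x) (hx2 : x < 1/2) :
    r x * (3 - 4 * x) < 2 * x * (1 - x) := by
  have hss := s_sq x
  have hsp := s_pos x
  have h34 : (0:ℝ) < 3 - 4 * x := by linarith
  have hkey : 9 - 28 * x + 16 * x ^ 2 < Real.sqrt (1 + 8 * (1 - 2 * x) ^ 2) * (3 - 4 * x) := by
    rcases le_or_gt (9 - 28 * x + 16 * x ^ 2) 0 with h | h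
    · calc 9 - 28 * x + 16 * x ^ 2 ≤ 0 := h
        _ < _ := mul_pos hsp h34
    · by_contra hcon
      push_neg at hcon
      have hsq := mul_le_mul hcon hcon (by positivity) h.le
      nlinarith [hsq, hss, mul_pos hx0 hx0, mul_pos (mul_pos hx0 hx0) hx0]
  unfold r
  nlinarith [hkey]

lemma deriv_lt {x : ℝ} (hx0 : 0 < x) (hx2 : x < 1/2) :
    (2 * (Real.log (1 - (x - r x) / (1 - 2 * r x)) - Real.log ((x - r x) / (1 - 2 * r x)))
        - 2 * (Real.log (1 - x) - Real.log x)) / Real.log 2 < 2 * Real.logb 2 3 := by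
  set Q : ℝ := (x - r x) / (1 - 2 * r x) with hQdef
  have h12R : 0 < 1 - 2 * r x := one_sub_two_r_pos x
  have hQ0 : 0 < Q := Q_pos hx0 hx2
  have hQx : Q < x := Q_lt_x hx0 hx2
  have hL : 0 < Real.log 2 := Real.log_pos (by norm_num)
  have hrb := r_bound hx0 hx2
  have key2 : (1 - x - r x) * x < 3 * ((x - r x) * (1 - x)) := by nlinarith [hrb]
  have eQ : Q * (1 - 2 * r x) = x - r x := by
    rw [hQdef]; exact div_mul_cancel₀ _ h12R.ne'
  have e1 : (1 - Q) * (1 - 2 * r x) = 1 - x - r x := by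
    have h' : (1 - Q) * (1 - 2 * r x) = (1 - 2 * r x) - Q * (1 - 2 * r x) := by ring
    rw [h', eQ]; ring
  have hmain : (1 - Q) * x < 3 * (Q * (1 - x)) := by
    refine lt_of_mul_lt_mul_right ?_ h12R.le
    have l1 : (1 - Q) * x * (1 - 2 * r x) = (1 - x - r x) * x := by
      have h' : (1 - Q) * x * (1 - 2 * r x) = (1 - Q) * (1 - 2 * r x) * x := by ring
      rw [h', e1]
    have l2 : 3 * (Q * (1 - x)) * (1 - 2 * r x) = 3 * ((x - r x) * (1 - x)) := by
      have h' : 3 * (Q * (1 - x)) * (1 - 2 * r x) = 3 * (1 - x) * (Q * (1 - 2 * r x)) := by ring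
      rw [h', eQ]; ring
    rw [l1, l2]; exact key2
  have h1Q : 0 < 1 - Q := by linarith [hQx]
  have h1x : (0:ℝ) < 1 - x := by linarith
  have hlog : Real.log ((1 - Q) * x) < Real.log (3 * (Q * (1 - x))) :=
    Real.log_lt_log (mul_pos h1Q hx0) hmain
  rw [Real.log_mul h1Q.ne' hx0.ne', Real.log_mul (by norm_num : (3:ℝ) ≠ 0)
      (mul_ne_zero hQ0.ne' h1x.ne'),
      Real.log_mul hQ0.ne' h1x.ne'] at hlog
  have h3 : 2 * Real.logb 2 3 = (2 * Real.log 3) / Real.log 2 := by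
    rw [Real.logb]; ring
  rw [h3]
  rw [div_lt_div_iff_of_pos_right hL]
  linarith

theorem stmt_17 :
    ∀ x ∈ Set.Icc (0 : ℝ) (1 / 2),
      psi x ≤ min (2 * Real.logb 2 3 * x) 1 ∧
      (psi x = 2 * Real.logb 2 3 * x → x = 0) ∧
      (psi x = 1 → x = 1 / 2) := by
  have hmono : StrictMonoOn psi (Set.Icc 0 (1/2)) := by
    apply strictMonoOn_of_deriv_pos (convex_Icc _ _) psi_continuous.continuousOn
    intro y hy
    rw [interior_Icc] at hy
    rw [(psi_hasDerivAt hy.1 hy.2).deriv]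
    exact deriv_pos hy.1 hy.2
  have hgmono : StrictMonoOn (fun y => 2 * Real.logb 2 3 * y - psi y) (Set.Icc 0 (1/2)) := by
    apply strictMonoOn_of_deriv_pos (convex_Icc _ _)
    · exact ((continuous_const.mul continuous_id).sub psi_continuous).continuousOn
    · intro y hy
      rw [interior_Icc] at hy
      have hd : HasDerivAt (fun y => 2 * Real.logb 2 3 * y - psi y)
          (2 * Real.logb 2 3 * 1 - ((2 * (Real.log (1 - (y - r y) / (1 - 2 * r y)) -
            Real.log ((y - r y) / (1 - 2 * r y))) -
            2 * (Real.log (1 - y) - Real.log y)) / Real.log 2)) y :=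
        ((hasDerivAt_id y).const_mul _).sub (psi_hasDerivAt hy.1 hy.2)
      rw [hd.deriv]
      have := deriv_lt hy.1 hy.2
      linarith
  have h0mem : (0:ℝ) ∈ Set.Icc (0:ℝ) (1/2) := by constructor <;> norm_num
  have hhmem : (1/2:ℝ) ∈ Set.Icc (0:ℝ) (1/2) := by constructor <;> norm_num
  intro x hx
  refine ⟨le_min ?_ ?_, ?_, ?_⟩
  · rcases eq_or_lt_of_le hx.1 with h | h
    · rw [← h, psi_zero]; norm_num
    · have := hgmono h0mem hx h
      have h2 : 0 < 2 * Real.logb 2 3 * x - psi x := by simpa [psi_zero] using this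
      linarith
  · rcases eq_or_lt_of_le hx.2 with h | h
    · rw [h, psi_half]
    · have := hmono hx hhmem h
      rw [psi_half] at this
      linarith
  · intro he
    by_contra hne
    have h : 0 < x := lt_of_le_of_ne hx.1 (Ne.symm hne)
    have := hgmono h0mem hx h
    have h2 : 0 < 2 * Real.logb 2 3 * x - psi x := by simpa [psi_zero] using this
    linarith
  · intro he
    by_contra hne
    have h : x < 1/2 := lt_of_le_of_ne hx.2 hne
    have := hmono hx hhmem h
    rw [psi_half] at this
    linarith
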